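/- Let V be the vertex poset of a finite arborescence, Ω the state space with thresholds T_v, and σ_v : Ω → Ω the source operator at v, which adds one grain at the first non-full vertex on the path from v down to the root (doing nothing if all are full). Then the operators {σ_v : v ∈ V} pairwise commute and each σ_v is increasing for the dominance order: t ⊴ σ_v(t) for all t. -/

import Mathlib

/-- Dominance order on sand configurations: compare the sums over principal upsets. -/
def domRel {V : Type*} [Fintype V] [PartialOrder V]
    [DecidableRel ((· ≤ ·) : V → V → Prop)] (t t' : V → ℕ) : Prop :=
  ∀ v : V, ∑ w ∈ Finset.univ.filter (fun w => v ≤ w), t w ≤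
    ∑ w ∈ Finset.univ.filter (fun w => v ≤ w), t' w

/-- Specification of the source operator σ_v: on a valid configuration it adds one
grain at the first (largest) vertex ≤ v on the path from v to the root that is not at
its threshold, and does nothing if that whole path is full. -/
def sourceSpec {V : Type*} [PartialOrder V] [DecidableEq V] (T : V → ℕ) (v : V)
    (σ : (V → ℕ) → (V → ℕ)) : Prop :=
  ∀ t : V → ℕ, (∀ w, t w ≤ T w) →
    ((∀ w, w ≤ v → t w = T w) → σ t = t) ∧
    (∀ w, w ≤ v → t w < T w → (∀ u, w < u → u ≤ v → t u = T u) →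
      σ t = Function.update t w (t w + 1))

/-- Key structural lemma: on a valid configuration, a source operator either fixes the
configuration (path full) or adds a grain at the greatest non-full vertex on the path. -/
lemma sourceSpec_key {V : Type*} [Fintype V] [PartialOrder V] [DecidableEq V]
    (hchain : ∀ v : V, IsChain (· ≤ ·) {w | w ≤ v})
    (T : V → ℕ) (v : V) (σ : (V → ℕ) → (V → ℕ)) (hσ : sourceSpec T v σ)
    (t : V → ℕ) (ht : ∀ w, t w ≤ T w) :
    ((∀ w, w ≤ v → t w = T w) ∧ σ t = t) ∨
    (∃ w, w ≤ v ∧ t w < T w ∧ (∀ x, x ≤ v → t x < T x → x ≤ w) ∧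
      σ t = Function.update t w (t w + 1)) := by
  classical
  by_cases h : ∀ w, w ≤ v → t w = T w
  · exact Or.inl ⟨h, (hσ t ht).1 h⟩
  · push_neg at h
    obtain ⟨w₀, hw₀v, hw₀⟩ := h
    have hlt : t w₀ < T w₀ := lt_of_le_of_ne (ht w₀) hw₀
    set s : Finset V := Finset.univ.filter (fun x => x ≤ v ∧ t x < T x) with hs
    have hne : s.Nonempty := ⟨w₀, by simp [hs, hw₀v, hlt]⟩
    obtain ⟨a, ha, hmax⟩ := s.exists_maximal hne
    have hav : a ≤ v ∧ t a < T a := by simpa [hs] using ha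
    have hub : ∀ x, x ≤ v → t x < T x → x ≤ a := by
      intro x hx hxlt
      have hxs : x ∈ s := by simp [hs, hx, hxlt]
      rcases eq_or_ne x a with rfl | hne'
      · exact le_rfl
      · rcases hchain v (show x ∈ {w | w ≤ v} from hx) (show a ∈ {w | w ≤ v} from hav.1)
            hne' with h' | h'
        · exact h'
        · exact hmax hxs h'
    refine Or.inr ⟨a, hav.1, hav.2, hub, ?_⟩
    refine (hσ t ht).2 a hav.1 hav.2 (fun x hax hxv => ?_)
    by_contra h'
    exact absurd (hub x hxv (lt_of_le_of_ne (ht x) h')) (not_le_of_gt hax)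

lemma update_valid {V : Type*} [DecidableEq V] {T t : V → ℕ} (ht : ∀ w, t w ≤ T w)
    {a : V} (ha : t a < T a) : ∀ w, Function.update t a (t a + 1) w ≤ T w := by
  intro w
  rcases eq_or_ne w a with rfl | hne
  · simpa using ha
  · simpa [Function.update_of_ne hne] using ht w

/-- If the non-full parts of the two paths coincide, the two source operators agree. -/
lemma sourceSpec_same {V : Type*} [Fintype V] [PartialOrder V] [DecidableEq V]
    (hchain : ∀ v : V, IsChain (· ≤ ·) {w | w ≤ v})
    (T : V → ℕ) (u v : V) (σ₁ σ₂ : (V → ℕ) → (V → ℕ))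
    (h₁ : sourceSpec T u σ₁) (h₂ : sourceSpec T v σ₂)
    (t : V → ℕ) (ht : ∀ w, t w ≤ T w)
    (hset : ∀ x, (x ≤ u ∧ t x < T x) ↔ (x ≤ v ∧ t x < T x)) : σ₁ t = σ₂ t := by
  rcases sourceSpec_key hchain T u σ₁ h₁ t ht with ⟨hf₁, e₁⟩ | ⟨a, hau, hta, hamax, e₁⟩ <;>
    rcases sourceSpec_key hchain T v σ₂ h₂ t ht with ⟨hf₂, e₂⟩ | ⟨b, hbv, htb, hbmax, e₂⟩
  · rw [e₁, e₂]
  · exact absurd (hf₁ b ((hset b).mpr ⟨hbv, htb⟩).1) (ne_of_lt htb)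
  · exact absurd (hf₂ a ((hset a).mp ⟨hau, hta⟩).1) (ne_of_lt hta)
  · have hab : a ≤ b := hbmax a ((hset a).mp ⟨hau, hta⟩).1 hta
    have hba : b ≤ a := hamax b ((hset b).mpr ⟨hbv, htb⟩).1 htb
    have : a = b := le_antisymm hab hba
    subst this
    rw [e₁, e₂]

/-- the source operators pairwise commute, and each is increasing for
the dominance order: t ⊴ σ_v(t). -/
theorem stmt10 (V : Type*) [Fintype V] [PartialOrder V] [DecidableEq V]
    [DecidableRel ((· ≤ ·) : V → V → Prop)]
    (hroot : ∃ r : V, ∀ v, r ≤ v)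
    (hchain : ∀ v : V, IsChain (· ≤ ·) {w | w ≤ v})
    (T : V → ℕ) (hT : ∀ v, 1 ≤ T v) (u v : V)
    (σu σv : (V → ℕ) → (V → ℕ))
    (hσu : sourceSpec T u σu) (hσv : sourceSpec T v σv) :
    (∀ t : V → ℕ, (∀ w, t w ≤ T w) → σu (σv t) = σv (σu t)) ∧
    (∀ t : V → ℕ, (∀ w, t w ≤ T w) → domRel t (σv t)) := by
  constructor
  · -- commutation
    intro t ht
    rcases sourceSpec_key hchain T v σv hσv t ht with ⟨hfv, ev⟩ | ⟨a, hav, hta, hamax, ev⟩ <;>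
      rcases sourceSpec_key hchain T u σu hσu t ht with ⟨hfu, eu⟩ | ⟨b, hbu, htb, hbmax, eu⟩
    · rw [ev, eu, ev]
    · -- v's path full, u's not
      rw [ev, eu]
      have ht'' : ∀ w, Function.update t b (t b + 1) w ≤ T w := update_valid ht htb
      refine ((hσv _ ht'').1 (fun w hwv => ?_)).symm
      have hwb : w ≠ b := by
        rintro rfl
        exact absurd (hfv w hwv) (ne_of_lt htb)
      rw [Function.update_of_ne hwb]
      exact hfv w hwv
    · -- u's path full, v's not
      rw [ev, eu, ev]
      have ht' : ∀ w, Function.update t a (t a + 1) w ≤ T w := update_valid ht hta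
      refine (hσu _ ht').1 (fun w hwu => ?_)
      have hwa : w ≠ a := by
        rintro rfl
        exact absurd (hfu w hwu) (ne_of_lt hta)
      rw [Function.update_of_ne hwa]
      exact hfu w hwu
    · -- both nonfull
      have ht' : ∀ w, Function.update t a (t a + 1) w ≤ T w := update_valid ht hta
      have ht'' : ∀ w, Function.update t b (t b + 1) w ≤ T w := update_valid ht htb
      rcases eq_or_ne a b with rfl | hab
      · rw [ev, eu]
        refine sourceSpec_same hchain T u v σu σv hσu hσv _ ht' (fun x => ?_)
        constructor
        · rintro ⟨hxu, hx⟩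
          rcases eq_or_ne x a with rfl | hxa
          · exact ⟨hav, hx⟩
          · rw [Function.update_of_ne hxa] at hx ⊢
            exact ⟨le_trans (hbmax x hxu hx) hav, hx⟩
        · rintro ⟨hxv, hx⟩
          rcases eq_or_ne x a with rfl | hxa
          · exact ⟨hbu, hx⟩
          · rw [Function.update_of_ne hxa] at hx ⊢
            exact ⟨le_trans (hamax x hxv hx) hbu, hx⟩
      · -- a ≠ b
        rw [ev, eu]
        have e₁ : σu (Function.update t a (t a + 1)) =
            Function.update (Function.update t a (t a + 1)) b
              ((Function.update t a (t a + 1)) b + 1) := by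
          refine (hσu _ ht').2 b hbu ?_ ?_
          · rw [Function.update_of_ne hab.symm]; exact htb
          · intro x hbx hxu
            have hxa : x ≠ a := by
              rintro rfl
              exact absurd (hbmax x hxu hta) (not_le_of_gt hbx)
            rw [Function.update_of_ne hxa]
            by_contra h'
            exact absurd (hbmax x hxu (lt_of_le_of_ne (ht x) h')) (not_le_of_gt hbx)
        have e₂ : σv (Function.update t b (t b + 1)) =
            Function.update (Function.update t b (t b + 1)) a
              ((Function.update t b (t b + 1)) a + 1) := by
          refine (hσv _ ht'').2 a hav ?_ ?_
          · rw [Function.update_of_ne hab]; exact hta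
          · intro x hax hxv
            have hxb : x ≠ b := by
              rintro rfl
              exact absurd (hamax x hxv htb) (not_le_of_gt hax)
            rw [Function.update_of_ne hxb]
            by_contra h'
            exact absurd (hamax x hxv (lt_of_le_of_ne (ht x) h')) (not_le_of_gt hax)
        rw [e₁, e₂]
        funext x
        rcases eq_or_ne x a with rfl | hxa <;> rcases eq_or_ne x b with rfl | hxb <;>
          simp [Function.update, hab, hab.symm, *]
  · -- monotonicity
    intro t ht
    have hpt : ∀ x, t x ≤ σv t x := by
      rcases sourceSpec_key hchain T v σv hσv t ht with ⟨_, ev⟩ | ⟨a, _, _, _, ev⟩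
      · rw [ev]; intro x; exact le_rfl
      · rw [ev]; intro x
        rcases eq_or_ne x a with rfl | hxa
        · simp
        · rw [Function.update_of_ne hxa]
    intro w
    exact Finset.sum_le_sum (fun x _ => hpt x)
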